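/- arXiv:2510.05811 — 5 statements merged into one kernel-verified Lean document; each statement's English description precedes it below -/
import Mathlib

section
/- Let G be a P_6-free finite simple graph, let xy be an edge of G lying in at least three triangles, and suppose that the connected component of G containing x has at least 6 vertices. Then every edge of G with both endpoints in this component is incident to x or to y; equivalently, every vertex of this component other than x and y has all of its neighbours in {x, y}. -/
/-- A simple graph is `P₆`-free if it contains no six distinct vertices
`v₁, …, v₆` with `vᵢv_{i+1}` an edge for all `i`. -/
def P6Free {V : Type*} (G : SimpleGraph V) : Prop :=
  ¬ ∃ v₁ v₂ v₃ v₄ v₅ v₆ : V, ([v₁, v₂, v₃, v₄, v₅, v₆] : List V).Nodup ∧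
    G.Adj v₁ v₂ ∧ G.Adj v₂ v₃ ∧ G.Adj v₃ v₄ ∧ G.Adj v₄ v₅ ∧ G.Adj v₅ v₆

/-!
Pick three common neighbours `z 0, z 1, z 2` of `x` and `y`. The five vertices `x, y, z i` span a
"book" `K` with many long paths: every vertex of `K` starts a path on four vertices inside `K`,
every page `z i` one on five, and if two pages are adjacent, every vertex of `K` starts one on five.
An edge `uv` of the component that avoids `x` and `y` joins a page to a vertex outside `K`, or
joins two pages, or lies outside `K`. Prefixing, respectively, `v`; a vertex outside `K` adjacent to
`K` (one exists since the component has a sixth vertex); or the last two vertices before a walk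
from `u` to `x` enters `K`, to such a path inside `K` produces a `P₆`.
-/

namespace SimpleGraph

variable {V : Type*} {G : SimpleGraph V}

def HasPathFrom (G : SimpleGraph V) (S : Set V) (n : ℕ) (w : V) : Prop :=
  ∃ l : List V, (w :: l).IsChain G.Adj ∧ (w :: l).Nodup ∧ (∀ a ∈ w :: l, a ∈ S) ∧
    n ≤ l.length + 1

section HasPathFrom

variable {S : Set V} {m n : ℕ} {b w : V}

lemma HasPathFrom.mono (h : G.HasPathFrom S n w) (hmn : m ≤ n) : G.HasPathFrom S m w := by
  obtain ⟨l, hc, hn, hS, hl⟩ := h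
  exact ⟨l, hc, hn, hS, hmn.trans hl⟩

lemma HasPathFrom.cons (h : G.HasPathFrom S n w) (hb : b ∉ S) (hbw : G.Adj b w) :
    G.HasPathFrom (insert b S) (n + 1) b := by
  obtain ⟨l, hc, hn, hS, hl⟩ := h
  refine ⟨w :: l, List.isChain_cons_cons.2 ⟨hbw, hc⟩,
    List.nodup_cons.2 ⟨fun hbl => hb (hS b hbl), hn⟩, ?_, by simpa using hl⟩
  rintro a (_ | ⟨_, ha⟩)
  · exact Set.mem_insert b S
  · exact Set.mem_insert_of_mem b (hS a ha)

lemma _root_.P6Free.not_hasPathFrom (hG : P6Free G) : ¬ G.HasPathFrom S 6 w := by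
  rintro ⟨l, hc, hn, -, hl⟩
  obtain ⟨v₂, v₃, v₄, v₅, v₆, l, rfl⟩ :
      ∃ v₂ v₃ v₄ v₅ v₆ l', l = v₂ :: v₃ :: v₄ :: v₅ :: v₆ :: l' := by
    rcases l with _ | ⟨_, _ | ⟨_, _ | ⟨_, _ | ⟨_, _ | ⟨_, _⟩⟩⟩⟩⟩ <;> simp_all
  simp only [List.isChain_cons_cons] at hc
  exact hG ⟨w, v₂, v₃, v₄, v₅, v₆, hn.sublist (by simp), hc.1, hc.2.1, hc.2.2.1, hc.2.2.2.1,
    hc.2.2.2.2.1⟩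

end HasPathFrom

lemma Walk.exists_adj_adj_of_notMem {S : Set V} {a b x : V} (p : G.Walk a x) (hx : x ∈ S)
    (ha : a ∉ S) (hb : b ∉ S) (hba : G.Adj b a) :
    ∃ c d w, c ∉ S ∧ d ∉ S ∧ w ∈ S ∧ G.Adj c d ∧ G.Adj d w := by
  induction p generalizing b with
  | nil => exact absurd hx ha
  | @cons a d x had q ih =>
    by_cases hd : d ∈ S
    · exact ⟨b, a, d, hb, ha, hd, hba, had⟩
    · exact ih hx hd ha had

structure IsBook (G : SimpleGraph V) (x y : V) (z : Fin 3 → V) : Prop where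
  adj : G.Adj x y
  injective : Function.Injective z
  adj_left : ∀ i, G.Adj x (z i)
  adj_right : ∀ i, G.Adj y (z i)

def bookVertices (x y : V) (z : Fin 3 → V) : Set V := insert x (insert y (Set.range z))

section IsBook

variable {x y w : V} {z : Fin 3 → V}

lemma notMem_bookVertices (hx : w ≠ x) (hy : w ≠ y) (hz : w ∉ Set.range z) :
    w ∉ bookVertices x y z := by
  simp [bookVertices, hx, hy, hz]

lemma exists_isBook (hxy : G.Adj x y) (htri : 3 ≤ {z : V | G.Adj x z ∧ G.Adj y z}.ncard) :
    ∃ z, G.IsBook x y z := by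
  obtain ⟨a, b, c, ⟨hxa, hya⟩, ⟨hxb, hyb⟩, ⟨hxc, hyc⟩, hab, hac, hbc⟩ :=
    (Set.two_lt_ncard_iff (Set.finite_of_ncard_pos (by omega))).1 htri
  refine ⟨![a, b, c], hxy, ?_, ?_, ?_⟩
  · intro i j
    fin_cases i <;> fin_cases j <;> simp [hab, hac, hbc, hab.symm, hac.symm, hbc.symm]
  all_goals intro i; fin_cases i <;> assumption

lemma IsBook.exists_notMem_of_ncard_lt (hB : G.IsBook x y z) {s : Set V} (hs : 5 < s.ncard) :
    ∃ a ∈ s, a ∉ bookVertices x y z := by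
  refine Set.exists_mem_notMem_of_ncard_lt_ncard ?_ ((Set.finite_range z).insert y |>.insert x)
  calc (bookVertices x y z).ncard ≤ (Set.range z).ncard + 1 + 1 :=
        (Set.ncard_insert_le _ _).trans (Nat.add_le_add_right (Set.ncard_insert_le _ _) 1)
    _ = 5 := by simp [Set.ncard_range_of_injective hB.injective]
    _ < s.ncard := hs

lemma IsBook.adj_page (hB : G.IsBook x y z) (i : Fin 3) :
    G.Adj x (z i) ∧ G.Adj (z i) x ∧ G.Adj y (z i) ∧ G.Adj (z i) y :=
  ⟨hB.adj_left i, (hB.adj_left i).symm, hB.adj_right i, (hB.adj_right i).symm⟩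

lemma IsBook.ne_page (hB : G.IsBook x y z) (i : Fin 3) :
    x ≠ z i ∧ z i ≠ x ∧ y ≠ z i ∧ z i ≠ y :=
  ⟨(hB.adj_left i).ne, (hB.adj_left i).ne', (hB.adj_right i).ne, (hB.adj_right i).ne'⟩

lemma IsBook.hasPathFrom_five (hB : G.IsBook x y z) (i : Fin 3) :
    G.HasPathFrom (bookVertices x y z) 5 (z i) := by
  have hi : i ≠ i + 1 ∧ i ≠ i + 2 ∧ i + 1 ≠ i + 2 := by revert i; decide
  refine ⟨[x, z (i + 1), y, z (i + 2)], ?_, ?_, by simp [bookVertices], le_rfl⟩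
  · simp [hB.adj_page]
  · simp [hB.adj.ne, hB.ne_page, hB.injective.eq_iff, hi]

lemma IsBook.hasPathFrom_four (hB : G.IsBook x y z) (hw : w ∈ bookVertices x y z) :
    G.HasPathFrom (bookVertices x y z) 4 w := by
  rcases hw with rfl | rfl | ⟨i, rfl⟩
  · refine ⟨[z 0, y, z 1], ?_, ?_, by simp [bookVertices], le_rfl⟩
    · simp [hB.adj_page]
    · simp [hB.adj.ne, hB.ne_page, hB.injective.eq_iff]
  · refine ⟨[z 0, x, z 1], ?_, ?_, by simp [bookVertices], le_rfl⟩
    · simp [hB.adj_page]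
    · simp [hB.adj.ne', hB.ne_page, hB.injective.eq_iff]
  · exact (hB.hasPathFrom_five i).mono (by norm_num)

lemma IsBook.hasPathFrom_five_of_adj (hB : G.IsBook x y z) {i j : Fin 3}
    (hij : G.Adj (z i) (z j)) (hw : w ∈ bookVertices x y z) :
    G.HasPathFrom (bookVertices x y z) 5 w := by
  have third : ∀ i j : Fin 3, i ≠ j → ∃ k, k ≠ i ∧ k ≠ j ∧ ∀ m, m = i ∨ m = j ∨ m = k := by
    decide
  obtain ⟨k, hki, hkj, hk⟩ := third i j fun h => hij.ne (congrArg z h)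
  have hne : z i ≠ z j ∧ z j ≠ z i ∧ z k ≠ z i ∧ z i ≠ z k ∧ z k ≠ z j ∧ z j ≠ z k :=
    ⟨hij.ne, hij.ne', hB.injective.ne hki, hB.injective.ne hki.symm, hB.injective.ne hkj,
      hB.injective.ne hkj.symm⟩
  rcases hw with rfl | rfl | ⟨m, rfl⟩
  · refine ⟨[z k, y, z i, z j], ?_, ?_, by simp [bookVertices], le_rfl⟩
    · simp [hB.adj_page, hij]
    · simp [hB.adj.ne, hB.ne_page, hne]
  · refine ⟨[z k, x, z i, z j], ?_, ?_, by simp [bookVertices], le_rfl⟩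
    · simp [hB.adj_page, hij]
    · simp [hB.adj.ne', hB.ne_page, hne]
  rcases hk m with rfl | rfl | rfl
  · refine ⟨[z j, x, z k, y], ?_, ?_, by simp [bookVertices], le_rfl⟩
    · simp [hB.adj_page, hij]
    · simp [hB.adj.ne, hB.ne_page, hne]
  · refine ⟨[z i, x, z k, y], ?_, ?_, by simp [bookVertices], le_rfl⟩
    · simp [hB.adj_page, hij.symm]
    · simp [hB.adj.ne, hB.ne_page, hne]
  · refine ⟨[x, z i, z j, y], ?_, ?_, by simp [bookVertices], le_rfl⟩
    · simp [hB.adj_page, hij]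
    · simp [hB.adj.ne, hB.ne_page, hne]

end IsBook

end SimpleGraph

open SimpleGraph in
theorem stmt3_general {V : Type*} (G : SimpleGraph V) (hP6 : P6Free G)
    (x y : V) (hxy : G.Adj x y)
    (htri : 3 ≤ {z : V | G.Adj x z ∧ G.Adj y z}.ncard)
    (hcomp : 6 ≤ {z : V | G.Reachable x z}.ncard) :
    ∀ u v : V, G.Adj u v → G.Reachable x u →
      u = x ∨ u = y ∨ v = x ∨ v = y := by
  intro u v huv hxu
  by_contra! hne
  obtain ⟨hux, huy, hvx, hvy⟩ := hne
  obtain ⟨z, hB⟩ := exists_isBook hxy htri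
  have hxK : x ∈ bookVertices x y z := Set.mem_insert x _
  by_cases hu : u ∈ Set.range z <;> by_cases hv : v ∈ Set.range z
  · obtain ⟨i, rfl⟩ := hu
    obtain ⟨j, rfl⟩ := hv
    obtain ⟨a, ⟨p⟩, haK⟩ := hB.exists_notMem_of_ncard_lt (s := {a | G.Reachable x a}) hcomp
    obtain ⟨d, -, hd, hd'⟩ := p.exists_boundary_dart _ hxK haK
    exact hP6.not_hasPathFrom ((hB.hasPathFrom_five_of_adj huv hd).cons hd' d.adj.symm)
  · obtain ⟨i, rfl⟩ := hu
    exact hP6.not_hasPathFrom ((hB.hasPathFrom_five i).cons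
      (notMem_bookVertices hvx hvy hv) huv.symm)
  · obtain ⟨j, rfl⟩ := hv
    exact hP6.not_hasPathFrom ((hB.hasPathFrom_five j).cons
      (notMem_bookVertices hux huy hu) huv)
  · obtain ⟨p⟩ := hxu.symm
    obtain ⟨c, d, w, hc, hd, hw, hcd, hdw⟩ := p.exists_adj_adj_of_notMem hxK
      (notMem_bookVertices hux huy hu) (notMem_bookVertices hvx hvy hv) huv.symm
    exact hP6.not_hasPathFrom (((hB.hasPathFrom_four hw).cons hd hdw).cons
      (fun h => (Set.mem_insert_iff.1 h).elim hcd.ne hc) hcd)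

/-- In a `P₆`-free finite simple graph, if the edge `xy` lies in at least three
triangles and the component of `x` has at least `6` vertices, then every edge of
that component is incident to `x` or `y`. -/
theorem stmt3 {V : Type*} [Fintype V] (G : SimpleGraph V) (hP6 : P6Free G)
    (x y : V) (hxy : G.Adj x y)
    (htri : 3 ≤ {z : V | G.Adj x z ∧ G.Adj y z}.ncard)
    (hcomp : 6 ≤ {z : V | G.Reachable x z}.ncard) :
    ∀ u v : V, G.Adj u v → G.Reachable x u →
      u = x ∨ u = y ∨ v = x ∨ v = y :=
  stmt3_general G hP6 x y hxy htri hcomp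
end

section
/- Let G be a P_6-free finite simple graph in which every edge lies in at most one triangle. Then every connected component of G that contains at least two triangles has a vertex belonging to all triangles of that component. -/
section Helpers

open SimpleGraph

variable {V : Type*} {G : SimpleGraph V}

lemma getVert_mem_support {u v : V} (p : G.Walk u v) (i : ℕ) :
    p.getVert i ∈ p.support := by
  induction p generalizing i with
  | nil => cases i <;> simp [SimpleGraph.Walk.getVert]
  | cons h q ih =>
    cases i with
    | zero => simp [SimpleGraph.Walk.getVert]
    | succ n => simp [SimpleGraph.Walk.getVert, ih]

lemma getVert_inj {u v : V} {p : G.Walk u v} (hp : p.IsPath) :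
    ∀ {i j : ℕ}, i ≤ p.length → j ≤ p.length → p.getVert i = p.getVert j → i = j := by
  induction p with
  | nil => intro i j hi hj _; simp only [Walk.length_nil, Nat.le_zero] at hi hj; omega
  | cons h q ih =>
    intro i j hi hj hij
    rw [SimpleGraph.Walk.cons_isPath_iff] at hp
    cases i with
    | zero => cases j with
      | zero => rfl
      | succ m =>
        exfalso
        apply hp.2
        rw [Walk.getVert_zero, Walk.getVert_cons_succ] at hij
        rw [hij]
        exact getVert_mem_support q m
    | succ n => cases j with
      | zero =>
        exfalso
        apply hp.2
        rw [Walk.getVert_cons_succ, Walk.getVert_zero] at hij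
        rw [← hij]
        exact getVert_mem_support q n
      | succ m =>
        rw [Walk.getVert_cons_succ, Walk.getVert_cons_succ] at hij
        simp only [Walk.length_cons] at hi hj
        exact congrArg Nat.succ (ih hp.1 (by omega) (by omega) hij)


open SimpleGraph

variable {V : Type*} [DecidableEq V] {G : SimpleGraph V}

lemma third {T : Finset V} (h : G.IsNClique 3 T) {u v : V} (hu : u ∈ T) (hv : v ∈ T)
    (huv : u ≠ v) :
    ∃ t, t ≠ u ∧ t ≠ v ∧ t ∈ T ∧ T = {u, v, t} ∧ G.Adj u v ∧ G.Adj u t ∧ G.Adj v t := by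
  have hadj : ∀ x ∈ T, ∀ y ∈ T, x ≠ y → G.Adj x y := fun x hx y hy hxy =>
    h.1 (Finset.mem_coe.mpr hx) (Finset.mem_coe.mpr hy) hxy
  have hcard : T.card = 3 := h.2
  have hsub : ({u, v} : Finset V) ⊆ T := by
    intro x hx; simp at hx; rcases hx with rfl | rfl <;> assumption
  have h2 : ({u, v} : Finset V).card = 2 := by
    rw [Finset.card_insert_of_notMem (by simp [huv]), Finset.card_singleton]
  have hne : (T \ {u, v}).Nonempty := by
    rw [← Finset.card_pos, Finset.card_sdiff_of_subset hsub, hcard, h2]; norm_num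
  obtain ⟨t, ht⟩ := hne
  rw [Finset.mem_sdiff] at ht
  have ht2 := ht.2
  simp only [Finset.mem_insert, Finset.mem_singleton, not_or] at ht2
  obtain ⟨htu, htv⟩ := ht2
  refine ⟨t, htu, htv, ht.1, ?_, hadj u hu v hv huv, hadj u hu t ht.1 (Ne.symm htu),
    hadj v hv t ht.1 (Ne.symm htv)⟩
  have hsub3 : ({u, v, t} : Finset V) ⊆ T := by
    intro x hx; simp at hx; rcases hx with rfl | rfl | rfl <;> first | assumption | exact ht.1
  have hc3 : ({u, v, t} : Finset V).card = 3 := by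
    rw [Finset.card_insert_of_notMem (by simp [huv, Ne.symm htu]),
      Finset.card_insert_of_notMem (by simp [Ne.symm htv]), Finset.card_singleton]
  exact (Finset.eq_of_subset_of_card_le hsub3 (by rw [hcard, hc3])).symm

lemma others {T : Finset V} (h : G.IsNClique 3 T) {u : V} (hu : u ∈ T) :
    ∃ b c, b ≠ c ∧ b ≠ u ∧ c ≠ u ∧ b ∈ T ∧ c ∈ T ∧ G.Adj u b ∧ G.Adj u c ∧ G.Adj b c := by
  obtain ⟨b, hb, hbu⟩ := Finset.exists_mem_ne (by rw [h.2]; norm_num) u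
  obtain ⟨t, htu, htb, htT, _, hadj1, hadj2, hadj3⟩ := third h hu hb (Ne.symm hbu)
  exact ⟨b, t, Ne.symm htb, hbu, htu, hb, htT, hadj1, hadj2, hadj3⟩

lemma nodup6 {α : Type*} {a b c d e f : α} (h1 : a ≠ b) (h2 : a ≠ c) (h3 : a ≠ d)
    (h4 : a ≠ e) (h5 : a ≠ f) (h6 : b ≠ c) (h7 : b ≠ d) (h8 : b ≠ e) (h9 : b ≠ f)
    (h10 : c ≠ d) (h11 : c ≠ e) (h12 : c ≠ f) (h13 : d ≠ e) (h14 : d ≠ f) (h15 : e ≠ f) :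
    ([a, b, c, d, e, f] : List α).Nodup := by
  simp_all

lemma shared_edge [Fintype V]
    (hone : ∀ u v : V, G.Adj u v → {z : V | G.Adj u z ∧ G.Adj v z}.ncard ≤ 1)
    {T₁ T₂ : Finset V} (h1 : G.IsNClique 3 T₁) (h2 : G.IsNClique 3 T₂)
    {u v : V} (hu1 : u ∈ T₁) (hv1 : v ∈ T₁) (hu2 : u ∈ T₂) (hv2 : v ∈ T₂) (huv : u ≠ v) :
    T₁ = T₂ := by
  obtain ⟨t₁, _, _, _, hT1, hadj, hu1', hv1'⟩ := third h1 hu1 hv1 huv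
  obtain ⟨t₂, _, _, _, hT2, _, hu2', hv2'⟩ := third h2 hu2 hv2 huv
  by_cases h : t₁ = t₂
  · rw [hT1, hT2, h]
  · exfalso
    have : 1 < {z : V | G.Adj u z ∧ G.Adj v z}.ncard := by
      rw [Set.one_lt_ncard (Set.toFinite _)]
      exact ⟨t₁, ⟨hu1', hv1'⟩, t₂, ⟨hu2', hv2'⟩, h⟩
    exact absurd (hone u v hadj) (by omega)

lemma triangles_meet (hP6 : P6Free G) {T₁ T₂ : Finset V}
    (h1 : G.IsNClique 3 T₁) (h2 : G.IsNClique 3 T₂)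
    (hr : ∀ x ∈ T₁, ∀ y ∈ T₂, G.Reachable x y) :
    ∃ x, x ∈ T₁ ∧ x ∈ T₂ := by
  by_contra hdisj
  push_neg at hdisj
  -- pick closest pair
  have hne : (T₁ ×ˢ T₂).Nonempty := by
    obtain ⟨a, ha⟩ := Finset.card_pos.mp (by rw [h1.2]; norm_num : 0 < T₁.card)
    obtain ⟨b, hb⟩ := Finset.card_pos.mp (by rw [h2.2]; norm_num : 0 < T₂.card)
    exact ⟨(a, b), Finset.mem_product.mpr ⟨ha, hb⟩⟩
  obtain ⟨⟨u, w⟩, hmem, hmin⟩ := Finset.exists_min_image (T₁ ×ˢ T₂)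
    (fun q => G.dist q.1 q.2) hne
  rw [Finset.mem_product] at hmem
  obtain ⟨hu1, hw2⟩ := hmem
  have huw : u ≠ w := fun h => hdisj u hu1 (h ▸ hw2)
  have hreach : G.Reachable u w := hr u hu1 w hw2
  obtain ⟨p, hp, hlen⟩ := hreach.exists_path_of_dist
  have hd1 : 1 ≤ p.length := by
    rcases Nat.eq_zero_or_pos p.length with h0 | h; exact absurd (Walk.eq_of_length_eq_zero h0) huw; exact h
  -- internal vertices avoid T₁
  have havoid1 : ∀ x ∈ p.support, x ≠ u → x ∉ T₁ := by
    intro x hx hxu hxT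
    have hq := p.dropUntil x hx
    have hle : G.dist x w ≤ (p.dropUntil x hx).length := dist_le _
    have hsum := p.length_takeUntil_le hx  -- maybe not the right lemma
    have hspec : (p.takeUntil x hx).append (p.dropUntil x hx) = p := p.take_spec hx
    have hlensum : (p.takeUntil x hx).length + (p.dropUntil x hx).length = p.length := by
      rw [← Walk.length_append, hspec]
    have htk : 1 ≤ (p.takeUntil x hx).length := by
      rcases Nat.eq_zero_or_pos (p.takeUntil x hx).length with h0 | h
      · exact absurd (Walk.eq_of_length_eq_zero h0).symm hxu
      · exact h
    have hlt : G.dist x w < G.dist u w := by omega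
    exact absurd (hmin (x, w) (Finset.mem_product.mpr ⟨hxT, hw2⟩)) (by simp; omega)
  have havoid2 : ∀ x ∈ p.support, x ≠ w → x ∉ T₂ := by
    intro x hx hxw hxT
    have hle : G.dist u x ≤ (p.takeUntil x hx).length := dist_le _
    have hspec : (p.takeUntil x hx).append (p.dropUntil x hx) = p := p.take_spec hx
    have hlensum : (p.takeUntil x hx).length + (p.dropUntil x hx).length = p.length := by
      rw [← Walk.length_append, hspec]
    have htk : 1 ≤ (p.dropUntil x hx).length := by
      rcases Nat.eq_zero_or_pos (p.dropUntil x hx).length with h0 | h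
      · exact absurd (Walk.eq_of_length_eq_zero h0) hxw
      · exact h
    have hlt : G.dist u x < G.dist u w := by omega
    exact absurd (hmin (u, x) (Finset.mem_product.mpr ⟨hu1, hxT⟩)) (by simp; omega)
  -- other triangle vertices
  obtain ⟨b, c, hbc, hbu, hcu, hbT, hcT, hub, huc, hbcadj⟩ := others h1 hu1
  obtain ⟨y, z, hyz, hyw, hzw, hyT, hzT, hwy, hwz, hyzadj⟩ := others h2 hw2
  have cross : ∀ s ∈ T₁, ∀ t ∈ T₂, s ≠ t := fun s hs t ht h => hdisj s hs (h ▸ ht)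
  -- case on p.length
  rcases Nat.lt_or_ge p.length 3 with hsmall | hbig
  · interval_cases h : p.length
    · -- length 1 : path b c u w y z
      have huwadj : G.Adj u w := by
        have := p.adj_getVert_succ (by omega : 0 < p.length)
        rwa [Walk.getVert_zero, show p.getVert 1 = w from p.getVert_of_length_le (by omega)] at this
      exact hP6 ⟨b, c, u, w, y, z,
        nodup6 hbc hbu (cross b hbT w hw2) (cross b hbT y hyT) (cross b hbT z hzT)
          hcu (cross c hcT w hw2) (cross c hcT y hyT) (cross c hcT z hzT)
          huw (cross u hu1 y hyT) (cross u hu1 z hzT)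
          (Ne.symm hyw) (Ne.symm hzw) hyz,
        hbcadj, huc.symm, huwadj, hwy, hyzadj⟩
    · -- length 2 : path b c u g w y with g = p.getVert 1
      set g := p.getVert 1 with hg
      have hgu : g ≠ u := by
        intro hgeq
        have := getVert_inj hp (by omega : 1 ≤ p.length) (by omega : 0 ≤ p.length)
          (by rw [← hg, hgeq, Walk.getVert_zero])
        omega
      have hgw : g ≠ w := by
        intro hgeq
        have := getVert_inj hp (by omega : 1 ≤ p.length) (le_refl p.length)
          (by rw [← hg, hgeq, Walk.getVert_length])
        omega
      have hgsup : g ∈ p.support := getVert_mem_support p 1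
      have hg1 : g ∉ T₁ := havoid1 g hgsup hgu
      have hg2 : g ∉ T₂ := havoid2 g hgsup hgw
      have hug : G.Adj u g := by
        have := p.adj_getVert_succ (by omega : 0 < p.length)
        rwa [Walk.getVert_zero] at this
      have hgwadj : G.Adj g w := by
        have := p.adj_getVert_succ (by omega : 1 < p.length)
        rwa [show p.getVert 2 = w from p.getVert_of_length_le (by omega)] at this
      exact hP6 ⟨b, c, u, g, w, y,
        nodup6 hbc hbu (fun h => hg1 (h ▸ hbT)) (cross b hbT w hw2) (cross b hbT y hyT)
          hcu (fun h => hg1 (h ▸ hcT)) (cross c hcT w hw2) (cross c hcT y hyT)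
          (Ne.symm hgu) huw (cross u hu1 y hyT) hgw
          (fun h => hg2 (by rw [h]; exact hyT)) (Ne.symm hyw),
        hbcadj, huc.symm, hug, hgwadj, hwy⟩
  · -- length ≥ 3 : path b c u g1 g2 g3
    set g1 := p.getVert 1 with hg1d
    set g2 := p.getVert 2 with hg2d
    set g3 := p.getVert 3 with hg3d
    have inj : ∀ {i j : ℕ}, i ≤ p.length → j ≤ p.length → p.getVert i = p.getVert j → i = j :=
      fun hi hj => getVert_inj hp hi hj
    have h1u : g1 ≠ u := fun h => by
      have := inj (by omega : 1 ≤ p.length) (by omega : 0 ≤ p.length) (by rw [← hg1d, h, Walk.getVert_zero]); omega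
    have h2u : g2 ≠ u := fun h => by
      have := inj (by omega : 2 ≤ p.length) (by omega : 0 ≤ p.length) (by rw [← hg2d, h, Walk.getVert_zero]); omega
    have h3u : g3 ≠ u := fun h => by
      have := inj (by omega : 3 ≤ p.length) (by omega : 0 ≤ p.length) (by rw [← hg3d, h, Walk.getVert_zero]); omega
    have h12 : g1 ≠ g2 := fun h => by
      have := inj (by omega : 1 ≤ p.length) (by omega : 2 ≤ p.length) h; omega
    have h13 : g1 ≠ g3 := fun h => by
      have := inj (by omega : 1 ≤ p.length) (by omega : 3 ≤ p.length) h; omega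
    have h23 : g2 ≠ g3 := fun h => by
      have := inj (by omega : 2 ≤ p.length) (by omega : 3 ≤ p.length) h; omega
    have m1 : g1 ∉ T₁ := havoid1 g1 (getVert_mem_support p 1) h1u
    have m2 : g2 ∉ T₁ := havoid1 g2 (getVert_mem_support p 2) h2u
    have m3 : g3 ∉ T₁ := havoid1 g3 (getVert_mem_support p 3) h3u
    have a01 : G.Adj u g1 := by
      have := p.adj_getVert_succ (by omega : 0 < p.length); rwa [Walk.getVert_zero] at this
    have a12 : G.Adj g1 g2 := p.adj_getVert_succ (by omega : 1 < p.length)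
    have a23 : G.Adj g2 g3 := p.adj_getVert_succ (by omega : 2 < p.length)
    exact hP6 ⟨b, c, u, g1, g2, g3,
      nodup6 hbc hbu (fun h => m1 (h ▸ hbT)) (fun h => m2 (h ▸ hbT))
        (fun h => m3 (h ▸ hbT)) hcu (fun h => m1 (h ▸ hcT)) (fun h => m2 (h ▸ hcT))
        (fun h => m3 (h ▸ hcT)) (Ne.symm h1u) (Ne.symm h2u) (Ne.symm h3u) h12 h13 h23,
      hbcadj, huc.symm, a01, a12, a23⟩

end Helpers

/-- In a `P₆`-free finite simple graph in which every edge lies in at most one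
triangle, every connected component containing at least two triangles has a
vertex belonging to all triangles of that component. -/
theorem stmt4 {V : Type*} [Fintype V] (G : SimpleGraph V) (hP6 : P6Free G)
    (hone : ∀ u v : V, G.Adj u v → {z : V | G.Adj u z ∧ G.Adj v z}.ncard ≤ 1)
    (c : V)
    (h2 : ∃ T₁ T₂ : Finset V, G.IsNClique 3 T₁ ∧ G.IsNClique 3 T₂ ∧ T₁ ≠ T₂ ∧
      (∀ x ∈ T₁, G.Reachable c x) ∧ (∀ x ∈ T₂, G.Reachable c x)) :
    ∃ v : V, ∀ T : Finset V, G.IsNClique 3 T →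
      (∀ x ∈ T, G.Reachable c x) → v ∈ T := by
  classical
  obtain ⟨T₁, T₂, h1, h2', hT12, hr1, hr2⟩ := h2
  have reach : ∀ {A B : Finset V}, (∀ x ∈ A, G.Reachable c x) → (∀ x ∈ B, G.Reachable c x) →
      ∀ x ∈ A, ∀ y ∈ B, G.Reachable x y := fun hA hB x hx y hy => (hA x hx).symm.trans (hB y hy)
  obtain ⟨v, hv1, hv2⟩ := triangles_meet hP6 h1 h2' (reach hr1 hr2)
  refine ⟨v, ?_⟩
  intro T hT hrT
  by_contra hvT
  -- T shares a vertex with T₁ and with T₂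
  obtain ⟨u, huT, hu1⟩ := triangles_meet hP6 hT h1 (reach hrT hr1)
  obtain ⟨w, hwT, hw2⟩ := triangles_meet hP6 hT h2' (reach hrT hr2)
  have huv : u ≠ v := fun h => hvT (h ▸ huT)
  have hwv : w ≠ v := fun h => hvT (h ▸ hwT)
  have huw : u ≠ w := by
    rintro rfl
    exact hT12 (shared_edge hone h1 h2' hu1 hv1 hw2 hv2 huv)
  -- third vertices
  obtain ⟨a, hav, hau, haT1, hT1eq, hvu, hva, hua⟩ := third h1 hv1 hu1 (Ne.symm huv)
  obtain ⟨b, hbv, hbw, hbT2, hT2eq, hvw, hvb, hwb⟩ := third h2' hv2 hw2 (Ne.symm hwv)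
  obtain ⟨t, htu, htw, htT, hTeq, huwadj, hut, hwt⟩ := third hT huT hwT huw
  -- a ∉ T
  have haT : a ∉ T := by
    intro haTmem
    have hTT1 : T = T₁ := shared_edge hone hT h1 huT haTmem hu1 haT1 (Ne.symm hau)
    exact hvT (hTT1 ▸ hv1)
  have hbT : b ∉ T := by
    intro hbTmem
    have hTT2 : T = T₂ := shared_edge hone hT h2' hwT hbTmem hw2 hbT2 (Ne.symm hbw)
    exact hvT (hTT2 ▸ hv2)
  have hab : a ≠ b := by
    rintro rfl
    exact hT12 (shared_edge hone h1 h2' haT1 hv1 hbT2 hv2 hav)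
  -- P6 : a u t w b v
  exact hP6 ⟨a, u, t, w, b, v,
    nodup6 hau (fun h => haT (by rw [h]; exact htT)) (fun h => haT (by rw [h]; exact hwT))
      hab hav
      (Ne.symm htu) huw (fun h => hbT (by rw [← h]; exact huT)) huv
      htw (fun h => hbT (by rw [← h]; exact htT)) (fun h => hvT (by rw [← h]; exact htT))
      (fun h => hbT (by rw [← h]; exact hwT)) hwv hbv,
    hua.symm, hut, hwt.symm, hwb, hvb.symm⟩
end

section
/- Let G be a K_4-free finite simple graph with maximum degree at most 4. Then every vertex of G lies in at most 4 triangles, and if a vertex v lies in exactly 4 triangles, then v has exactly 4 neighbours and these 4 neighbours induce a 4-cycle in G (i.e. v is the center of a wheel W_4). -/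
private lemma pair_ne_pair {V : Type*} [DecidableEq V] {x y z w : V}
    (h : (x ≠ z ∧ x ≠ w) ∨ (y ≠ z ∧ y ≠ w)) : ({x, y} : Finset V) ≠ {z, w} := by
  rcases h with ⟨h1, h2⟩ | ⟨h1, h2⟩ <;> intro heq
  · have : x ∈ ({z, w} : Finset V) := heq ▸ (by simp : x ∈ ({x, y} : Finset V))
    simp only [Finset.mem_insert, Finset.mem_singleton] at this
    tauto
  · have : y ∈ ({z, w} : Finset V) := heq ▸ (by simp : y ∈ ({x, y} : Finset V))
    simp only [Finset.mem_insert, Finset.mem_singleton] at this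
    tauto

private lemma buildW {V : Type*} [Fintype V] [DecidableEq V] (G : SimpleGraph V) [DecidableRel G.Adj]
    {v w1 w2 w3 w4 : V}
    (h12 : w1 ≠ w2) (h13 : w1 ≠ w3) (h14 : w1 ≠ w4) (h23 : w2 ≠ w3) (h24 : w2 ≠ w4)
    (h34 : w3 ≠ w4) (hN : G.neighborFinset v = ({w1, w2, w3, w4} : Finset V))
    (a12 : G.Adj w1 w2) (a23 : G.Adj w2 w3) (a34 : G.Adj w3 w4) (a41 : G.Adj w4 w1)
    (n13 : ¬ G.Adj w1 w3) (n24 : ¬ G.Adj w2 w4) :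
    ∃ v₁ v₂ v₃ v₄ : V, ([v₁, v₂, v₃, v₄] : List V).Nodup ∧
      G.neighborSet v = {v₁, v₂, v₃, v₄} ∧
      G.Adj v₁ v₂ ∧ G.Adj v₂ v₃ ∧ G.Adj v₃ v₄ ∧ G.Adj v₄ v₁ ∧
      ¬ G.Adj v₁ v₃ ∧ ¬ G.Adj v₂ v₄ := by
  refine ⟨w1, w2, w3, w4, by simp [h12, h13, h14, h23, h24, h34], ?_, a12, a23, a34, a41,
    n13, n24⟩
  rw [SimpleGraph.neighborFinset_def] at hN
  rw [← Set.coe_toFinset (G.neighborSet v), hN]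
  simp

private lemma ite_eq_one_iff' {P : Prop} [Decidable P] (h : (if P then (1:ℕ) else 0) = 1) : P := by
  by_cases p : P
  · exact p
  · simp [p] at h

private lemma ite_eq_zero_iff' {P : Prop} [Decidable P] (h : (if P then (1:ℕ) else 0) = 0) : ¬ P := by
  by_cases p : P
  · simp [p] at h
  · exact p

private lemma sixcase (x1 x2 x3 x4 x5 x6 : ℕ)
    (b1 : x1 ≤ 1) (b2 : x2 ≤ 1) (b3 : x3 ≤ 1) (b4 : x4 ≤ 1) (b5 : x5 ≤ 1) (b6 : x6 ≤ 1)
    (t1 : x1 + x2 + x4 ≤ 2) (t2 : x1 + x3 + x5 ≤ 2) (t3 : x2 + x3 + x6 ≤ 2)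
    (t4 : x4 + x5 + x6 ≤ 2) (h : x1 + x2 + x3 + x4 + x5 + x6 = 4) :
    (x1 = 0 ∧ x2 = 1 ∧ x3 = 1 ∧ x4 = 1 ∧ x5 = 1 ∧ x6 = 0) ∨
    (x1 = 1 ∧ x2 = 0 ∧ x3 = 1 ∧ x4 = 1 ∧ x5 = 0 ∧ x6 = 1) ∨
    (x1 = 1 ∧ x2 = 1 ∧ x3 = 0 ∧ x4 = 0 ∧ x5 = 1 ∧ x6 = 1) := by omega

set_option maxHeartbeats 1000000 in
/-- In a `K₄`-free finite simple graph of maximum degree at most `4`, every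
vertex lies in at most `4` triangles, and a vertex lying in exactly `4`
triangles has exactly four neighbours which induce a `4`-cycle (so the vertex is
the center of a wheel `W₄`). -/
theorem stmt9 {V : Type*} [Fintype V] (G : SimpleGraph V) [DecidableRel G.Adj]
    (hK4 : G.CliqueFree 4) (hdeg : ∀ v, G.degree v ≤ 4) :
    (∀ v : V, {T : Finset V | G.IsNClique 3 T ∧ v ∈ T}.ncard ≤ 4) ∧
      (∀ v : V, {T : Finset V | G.IsNClique 3 T ∧ v ∈ T}.ncard = 4 →
        ∃ v₁ v₂ v₃ v₄ : V, ([v₁, v₂, v₃, v₄] : List V).Nodup ∧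
          G.neighborSet v = {v₁, v₂, v₃, v₄} ∧
          G.Adj v₁ v₂ ∧ G.Adj v₂ v₃ ∧ G.Adj v₃ v₄ ∧ G.Adj v₄ v₁ ∧
          ¬ G.Adj v₁ v₃ ∧ ¬ G.Adj v₂ v₄) := by
  classical
  have master : ∀ v : V, {T : Finset V | G.IsNClique 3 T ∧ v ∈ T}.ncard ≤ 4 ∧
      ({T : Finset V | G.IsNClique 3 T ∧ v ∈ T}.ncard = 4 →
        ∃ v₁ v₂ v₃ v₄ : V, ([v₁, v₂, v₃, v₄] : List V).Nodup ∧
          G.neighborSet v = {v₁, v₂, v₃, v₄} ∧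
          G.Adj v₁ v₂ ∧ G.Adj v₂ v₃ ∧ G.Adj v₃ v₄ ∧ G.Adj v₄ v₁ ∧
          ¬ G.Adj v₁ v₃ ∧ ¬ G.Adj v₂ v₄) := by
    intro v
    set S := G.neighborFinset v with hSdef
    set Tri := (G.cliqueFinset 3).filter (fun T => v ∈ T) with hTri
    have hset : {T : Finset V | G.IsNClique 3 T ∧ v ∈ T} = ↑Tri := by
      ext T
      simp [hTri, SimpleGraph.mem_cliqueFinset_iff]
    rw [hset, Set.ncard_coe_finset]
    set E := Tri.image (fun T => T.erase v) with hE
    have hcard : Tri.card = E.card := by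
      rw [hE]
      refine (Finset.card_image_of_injOn ?_).symm
      intro T1 h1 T2 h2 h
      simp only [hTri, Finset.coe_filter, Set.mem_setOf_eq, Finset.mem_coe,
        SimpleGraph.mem_cliqueFinset_iff] at h1 h2
      rw [← Finset.insert_erase h1.2, ← Finset.insert_erase h2.2]
      exact congrArg _ h
    rw [hcard]
    -- membership characterizations
    have mem1 : ∀ e ∈ E, ∃ x y : V, x ≠ y ∧ x ∈ S ∧ y ∈ S ∧ e = {x, y} := by
      intro e he
      simp only [hE, Finset.mem_image] at he
      obtain ⟨T, hT, rfl⟩ := he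
      simp only [hTri, Finset.mem_filter, SimpleGraph.mem_cliqueFinset_iff] at hT
      obtain ⟨⟨hcl, hc3⟩, hvT⟩ := hT
      have h2 : (T.erase v).card = 2 := by
        rw [Finset.card_erase_of_mem hvT, hc3]
      obtain ⟨x, y, hxy, hexy⟩ := Finset.card_eq_two.mp h2
      have hxE : x ∈ T.erase v := hexy.symm ▸ (by simp : x ∈ ({x, y} : Finset V))
      have hyE : y ∈ T.erase v := hexy.symm ▸ (by simp : y ∈ ({x, y} : Finset V))
      have hax : G.Adj v x := hcl (Finset.mem_coe.mpr hvT)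
        (Finset.mem_coe.mpr (Finset.mem_of_mem_erase hxE))
        (Finset.ne_of_mem_erase hxE).symm
      have hay : G.Adj v y := hcl (Finset.mem_coe.mpr hvT)
        (Finset.mem_coe.mpr (Finset.mem_of_mem_erase hyE))
        (Finset.ne_of_mem_erase hyE).symm
      exact ⟨x, y, hxy, (SimpleGraph.mem_neighborFinset G v x).mpr hax,
        (SimpleGraph.mem_neighborFinset G v y).mpr hay, hexy⟩
    have mem2 : ∀ x y : V, x ∈ S → y ∈ S → x ≠ y →
        (({x, y} : Finset V) ∈ E ↔ G.Adj x y) := by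
      intro x y hx hy hxy
      rw [hSdef, SimpleGraph.mem_neighborFinset] at hx hy
      constructor
      · intro h
        simp only [hE, Finset.mem_image] at h
        obtain ⟨T, hT, hTe⟩ := h
        simp only [hTri, Finset.mem_filter, SimpleGraph.mem_cliqueFinset_iff] at hT
        have hxT : x ∈ T :=
          Finset.mem_of_mem_erase (hTe.symm ▸ (by simp : x ∈ ({x, y} : Finset V)))
        have hyT : y ∈ T :=
          Finset.mem_of_mem_erase (hTe.symm ▸ (by simp : y ∈ ({x, y} : Finset V)))
        exact hT.1.1 (Finset.mem_coe.mpr hxT) (Finset.mem_coe.mpr hyT) hxy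
      · intro h
        simp only [hE, Finset.mem_image]
        refine ⟨{v, x, y}, ?_, ?_⟩
        · simp only [hTri, Finset.mem_filter, SimpleGraph.mem_cliqueFinset_iff]
          exact ⟨SimpleGraph.is3Clique_triple_iff.mpr ⟨hx, hy, h⟩, by simp⟩
        · rw [Finset.erase_insert (by simp [hx.ne, hy.ne])]
    -- triangle-freeness of the neighbourhood
    have tfree : ∀ x y z : V, x ∈ S → y ∈ S → z ∈ S → x ≠ y → x ≠ z → y ≠ z →
        ¬ (G.Adj x y ∧ G.Adj x z ∧ G.Adj y z) := by
      rintro x y z hx hy hz hxy hxz hyz ⟨h1, h2, h3⟩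
      rw [hSdef, SimpleGraph.mem_neighborFinset] at hx hy hz
      refine hK4 {v, x, y, z} ⟨?_, ?_⟩
      · intro p hp q hq hpq
        simp only [Finset.coe_insert, Set.mem_insert_iff, Finset.coe_singleton,
          Set.mem_singleton_iff] at hp hq
        rcases hp with rfl | rfl | rfl | rfl <;> rcases hq with rfl | rfl | rfl | rfl <;>
          first
            | exact absurd rfl hpq
            | exact hx | exact hx.symm | exact hy | exact hy.symm
            | exact hz | exact hz.symm | exact h1 | exact h1.symm
            | exact h2 | exact h2.symm | exact h3 | exact h3.symm
      · rw [Finset.card_insert_of_notMem (by simp [hx.ne, hy.ne, hz.ne]),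
          Finset.card_insert_of_notMem (by simp [hxy, hxz]),
          Finset.card_insert_of_notMem (by simp [hyz]), Finset.card_singleton]
    have hS4 : S.card ≤ 4 := by
      rw [hSdef, SimpleGraph.card_neighborFinset_eq_degree]
      exact hdeg v
    have Esub : E ⊆ S.powersetCard 2 := by
      intro e he
      obtain ⟨x, y, hxy, hx, hy, rfl⟩ := mem1 e he
      rw [Finset.mem_powersetCard]
      refine ⟨?_, Finset.card_pair hxy⟩
      intro z hz
      simp only [Finset.mem_insert, Finset.mem_singleton] at hz
      rcases hz with rfl | rfl <;> assumption
    rcases Nat.lt_or_ge S.card 4 with hlt | hge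
    · -- small neighbourhood: at most C(3,2) = 3 pairs
      have hb : E.card ≤ 3 := by
        calc E.card ≤ (S.powersetCard 2).card := Finset.card_le_card Esub
          _ = S.card.choose 2 := Finset.card_powersetCard 2 S
          _ ≤ Nat.choose 3 2 := Nat.choose_le_choose 2 (by omega)
          _ = 3 := by decide
      exact ⟨by omega, fun h4 => by omega⟩
    · have hS4' : S.card = 4 := le_antisymm hS4 hge
      obtain ⟨a, t, hat, hta, ht⟩ := Finset.card_eq_succ.mp hS4'
      obtain ⟨b, c, d, hbc, hbd, hcd, rfl⟩ := Finset.card_eq_three.mp ht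
      simp only [Finset.mem_insert, Finset.mem_singleton] at hat
      push_neg at hat
      obtain ⟨hab, hac, had⟩ := hat
      have hSeq : S = ({a, b, c, d} : Finset V) := hta.symm
      have ha : a ∈ S := by rw [hSeq]; simp
      have hb : b ∈ S := by rw [hSeq]; simp
      have hc : c ∈ S := by rw [hSeq]; simp
      have hd : d ∈ S := by rw [hSeq]; simp
      have m1 := mem2 a b ha hb hab
      have m2 := mem2 a c ha hc hac
      have m3 := mem2 a d ha hd had
      have m4 := mem2 b c hb hc hbc
      have m5 := mem2 b d hb hd hbd
      have m6 := mem2 c d hc hd hcd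
      have t1 := tfree a b c ha hb hc hab hac hbc
      have t2 := tfree a b d ha hb hd hab had hbd
      have t3 := tfree a c d ha hc hd hac had hcd
      have t4 := tfree b c d hb hc hd hbc hbd hcd
      have hEfilter : E = Finset.filter (fun e => e ∈ E)
          ({{a,b},{a,c},{a,d},{b,c},{b,d},{c,d}} : Finset (Finset V)) := by
        ext e
        simp only [Finset.mem_filter, Finset.mem_insert, Finset.mem_singleton]
        constructor
        · intro he
          refine ⟨?_, he⟩
          obtain ⟨x, y, hxy, hx, hy, rfl⟩ := mem1 e he
          rw [hSeq] at hx hy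
          simp only [Finset.mem_insert, Finset.mem_singleton] at hx hy
          rcases hx with rfl|rfl|rfl|rfl <;> rcases hy with rfl|rfl|rfl|rfl <;>
            first
              | exact absurd rfl hxy
              | exact Or.inl rfl
              | exact Or.inr (Or.inl rfl)
              | exact Or.inr (Or.inr (Or.inl rfl))
              | exact Or.inr (Or.inr (Or.inr (Or.inl rfl)))
              | exact Or.inr (Or.inr (Or.inr (Or.inr (Or.inl rfl))))
              | exact Or.inr (Or.inr (Or.inr (Or.inr (Or.inr rfl))))
              | exact Or.inl (Finset.pair_comm _ _)
              | exact Or.inr (Or.inl (Finset.pair_comm _ _))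
              | exact Or.inr (Or.inr (Or.inl (Finset.pair_comm _ _)))
              | exact Or.inr (Or.inr (Or.inr (Or.inl (Finset.pair_comm _ _))))
              | exact Or.inr (Or.inr (Or.inr (Or.inr (Or.inl (Finset.pair_comm _ _)))))
              | exact Or.inr (Or.inr (Or.inr (Or.inr (Or.inr (Finset.pair_comm _ _)))))
        · exact fun h => h.2
      have n1 : ({a,b} : Finset V) ∉ ({{a,c},{a,d},{b,c},{b,d},{c,d}} : Finset (Finset V)) := by
        simp only [Finset.mem_insert, Finset.mem_singleton]
        push_neg
        exact ⟨pair_ne_pair (Or.inr ⟨hab.symm, hbc⟩), pair_ne_pair (Or.inr ⟨hab.symm, hbd⟩),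
          pair_ne_pair (Or.inl ⟨hab, hac⟩), pair_ne_pair (Or.inl ⟨hab, had⟩),
          pair_ne_pair (Or.inl ⟨hac, had⟩)⟩
      have n2 : ({a,c} : Finset V) ∉ ({{a,d},{b,c},{b,d},{c,d}} : Finset (Finset V)) := by
        simp only [Finset.mem_insert, Finset.mem_singleton]
        push_neg
        exact ⟨pair_ne_pair (Or.inr ⟨hac.symm, hcd⟩), pair_ne_pair (Or.inl ⟨hab, hac⟩),
          pair_ne_pair (Or.inl ⟨hab, had⟩), pair_ne_pair (Or.inl ⟨hac, had⟩)⟩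
      have n3 : ({a,d} : Finset V) ∉ ({{b,c},{b,d},{c,d}} : Finset (Finset V)) := by
        simp only [Finset.mem_insert, Finset.mem_singleton]
        push_neg
        exact ⟨pair_ne_pair (Or.inl ⟨hab, hac⟩), pair_ne_pair (Or.inl ⟨hab, had⟩),
          pair_ne_pair (Or.inl ⟨hac, had⟩)⟩
      have n4 : ({b,c} : Finset V) ∉ ({{b,d},{c,d}} : Finset (Finset V)) := by
        simp only [Finset.mem_insert, Finset.mem_singleton]
        push_neg
        exact ⟨pair_ne_pair (Or.inr ⟨hbc.symm, hcd⟩), pair_ne_pair (Or.inl ⟨hbc, hbd⟩)⟩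
      have n5 : ({b,d} : Finset V) ∉ ({{c,d}} : Finset (Finset V)) := by
        simp only [Finset.mem_singleton]
        exact pair_ne_pair (Or.inl ⟨hbc, hbd⟩)
      have hE6 : E.card =
          (if ({a,b} : Finset V) ∈ E then 1 else 0) +
          ((if ({a,c} : Finset V) ∈ E then 1 else 0) +
          ((if ({a,d} : Finset V) ∈ E then 1 else 0) +
          ((if ({b,c} : Finset V) ∈ E then 1 else 0) +
          ((if ({b,d} : Finset V) ∈ E then 1 else 0) +
          (if ({c,d} : Finset V) ∈ E then 1 else 0))))) := by
        conv_lhs => rw [hEfilter]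
        rw [Finset.card_filter, Finset.sum_insert n1, Finset.sum_insert n2,
          Finset.sum_insert n3, Finset.sum_insert n4, Finset.sum_insert n5,
          Finset.sum_singleton]
      simp only [m1, m2, m3, m4, m5, m6] at hE6
      have t1' : (if G.Adj a b then 1 else 0) + (if G.Adj a c then 1 else 0) +
          (if G.Adj b c then 1 else 0) ≤ 2 := by
        by_cases q1 : G.Adj a b <;> by_cases q2 : G.Adj a c <;> by_cases q3 : G.Adj b c <;>
          simp [q1, q2, q3] <;> exact absurd ⟨q1, q2, q3⟩ t1
      have t2' : (if G.Adj a b then 1 else 0) + (if G.Adj a d then 1 else 0) +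
          (if G.Adj b d then 1 else 0) ≤ 2 := by
        by_cases q1 : G.Adj a b <;> by_cases q2 : G.Adj a d <;> by_cases q3 : G.Adj b d <;>
          simp [q1, q2, q3] <;> exact absurd ⟨q1, q2, q3⟩ t2
      have t3' : (if G.Adj a c then 1 else 0) + (if G.Adj a d then 1 else 0) +
          (if G.Adj c d then 1 else 0) ≤ 2 := by
        by_cases q1 : G.Adj a c <;> by_cases q2 : G.Adj a d <;> by_cases q3 : G.Adj c d <;>
          simp [q1, q2, q3] <;> exact absurd ⟨q1, q2, q3⟩ t3
      have t4' : (if G.Adj b c then 1 else 0) + (if G.Adj b d then 1 else 0) +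
          (if G.Adj c d then 1 else 0) ≤ 2 := by
        by_cases q1 : G.Adj b c <;> by_cases q2 : G.Adj b d <;> by_cases q3 : G.Adj c d <;>
          simp [q1, q2, q3] <;> exact absurd ⟨q1, q2, q3⟩ t4
      clear t1 t2 t3 t4
      have b1 : (if G.Adj a b then 1 else 0) ≤ 1 := by split <;> norm_num
      have b2 : (if G.Adj a c then 1 else 0) ≤ 1 := by split <;> norm_num
      have b3 : (if G.Adj a d then 1 else 0) ≤ 1 := by split <;> norm_num
      have b4 : (if G.Adj b c then 1 else 0) ≤ 1 := by split <;> norm_num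
      have b5 : (if G.Adj b d then 1 else 0) ≤ 1 := by split <;> norm_num
      have b6 : (if G.Adj c d then 1 else 0) ≤ 1 := by split <;> norm_num
      refine ⟨by omega, fun h4 => ?_⟩
      have hN1 : G.neighborFinset v = ({a, b, c, d} : Finset V) := by
        rw [← hSdef]; exact hSeq
      have hN2 : G.neighborFinset v = ({a, c, b, d} : Finset V) := by
        rw [← hSdef, hSeq]
        exact congrArg (insert a) (Finset.insert_comm b c {d})
      have hN3 : G.neighborFinset v = ({a, b, d, c} : Finset V) := by
        rw [← hSdef, hSeq]
        exact congrArg (insert a) (congrArg (insert b) (Finset.pair_comm c d))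
      have hsum : (if G.Adj a b then 1 else 0) + (if G.Adj a c then 1 else 0) +
          (if G.Adj a d then 1 else 0) + (if G.Adj b c then 1 else 0) +
          (if G.Adj b d then 1 else 0) + (if G.Adj c d then 1 else 0) = 4 := by omega
      rcases sixcase _ _ _ _ _ _ b1 b2 b3 b4 b5 b6 t1' t2' t3' t4' hsum with
        ⟨e1, e2, e3, e4, e5, e6⟩ | ⟨e1, e2, e3, e4, e5, e6⟩ | ⟨e1, e2, e3, e4, e5, e6⟩
      · exact buildW G hac hab had hbc.symm hcd hbd hN2 (ite_eq_one_iff' e2)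
          (ite_eq_one_iff' e4).symm (ite_eq_one_iff' e5) (ite_eq_one_iff' e3).symm
          (ite_eq_zero_iff' e1) (ite_eq_zero_iff' e6)
      · exact buildW G hab hac had hbc hbd hcd hN1 (ite_eq_one_iff' e1)
          (ite_eq_one_iff' e4) (ite_eq_one_iff' e6) (ite_eq_one_iff' e3).symm
          (ite_eq_zero_iff' e2) (ite_eq_zero_iff' e5)
      · exact buildW G hab had hac hbd hbc hcd.symm hN3 (ite_eq_one_iff' e1)
          (ite_eq_one_iff' e5) (ite_eq_one_iff' e6).symm (ite_eq_one_iff' e2).symm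
          (ite_eq_zero_iff' e3) (ite_eq_zero_iff' e4)
  exact ⟨fun v => (master v).1, fun v => (master v).2⟩
end

section
/- Let n ≥ 3 and let G be a non-crossing finite simple graph on the vertex set ZMod n (n points in cyclic order on a circle). Then G has at most n − 2 triangles. -/
/-- `x` lies strictly between `a` and `b` on the cycle `ZMod n` (traversing from
`a` in the positive direction, `x` is met strictly before `b`). -/
def StrictBetween {n : ℕ} (a b x : ZMod n) : Prop :=
  0 < (x - a).val ∧ (x - a).val < (b - a).val

/-- A graph on `ZMod n` (viewed as `n` points in cyclic order on a circle) is
non-crossing if no two vertex-disjoint edges `{a,b}`, `{c,d}` cross, i.e. for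
no two such edges exactly one of `c, d` lies strictly between `a` and `b`. -/
def NonCrossing {n : ℕ} (G : SimpleGraph (ZMod n)) : Prop :=
  ∀ a b c d : ZMod n, G.Adj a b → G.Adj c d →
    a ≠ c → a ≠ d → b ≠ c → b ≠ d →
    (StrictBetween a b c ↔ StrictBetween a b d)

/-!
Order the vertices of each triangle by their representatives `0, …, n - 1` and send the triangle
to its middle vertex, which is neither `0` nor `n - 1`. Two triangles with the same middle vertex
`b` coincide: if their smallest vertices differed, the edge from the smaller one to `b` would cross
the edge joining the other smallest vertex to its largest vertex, and symmetrically for the largest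
vertices. Hence there are at most `n - 2` triangles.
-/

open Finset SimpleGraph

theorem Finset.exists_lt_lt_eq_of_card_eq_three {α : Type*} [LinearOrder α] {s : Finset α}
    (hs : #s = 3) : ∃ a b c, a < b ∧ b < c ∧ s = {a, b, c} := by
  let f := s.orderEmbOfFin hs
  refine ⟨f 0, f 1, f 2, f.strictMono (by decide), f.strictMono (by decide), ?_⟩
  conv_lhs => rw [← s.image_orderEmbOfFin_univ hs]
  ext x
  simp only [mem_image, mem_univ, true_and, Fin.exists_fin_succ, IsEmpty.exists_iff, or_false,
    mem_insert, mem_singleton, eq_comm (b := x)]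
  rfl

section

variable {n : ℕ} [NeZero n]

theorem ZMod.exists_val_lt_val_lt_eq_of_card_eq_three {t : Finset (ZMod n)} (ht : #t = 3) :
    ∃ a b c : ZMod n, a.val < b.val ∧ b.val < c.val ∧ t = {a, b, c} := by
  let e : ZMod n ↪ ℕ := ⟨ZMod.val, ZMod.val_injective n⟩
  obtain ⟨x, y, z, hxy, hyz, h⟩ := exists_lt_lt_eq_of_card_eq_three ((card_map e).trans ht)
  obtain ⟨a, -, rfl⟩ := mem_map.mp (h ▸ by simp : x ∈ t.map e)
  obtain ⟨b, -, rfl⟩ := mem_map.mp (h ▸ by simp : y ∈ t.map e)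
  obtain ⟨c, -, rfl⟩ := mem_map.mp (h ▸ by simp : z ∈ t.map e)
  refine ⟨a, b, c, hxy, hyz, map_injective e ?_⟩
  rw [h]
  simp

theorem strictBetween_of_val_lt_of_val_lt {a b x : ZMod n} (hax : a.val < x.val)
    (hxb : x.val < b.val) : StrictBetween a b x := by
  unfold StrictBetween
  rw [ZMod.val_sub hax.le, ZMod.val_sub (hax.trans hxb).le]
  omega

theorem not_strictBetween_of_val_le {a b x : ZMod n} (hab : a.val < b.val)
    (hbx : b.val ≤ x.val) : ¬ StrictBetween a b x := by
  unfold StrictBetween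
  rw [ZMod.val_sub (hab.le.trans hbx), ZMod.val_sub hab.le]
  omega

theorem NonCrossing.not_adj_of_val_lt_of_val_lt_of_val_lt {G : SimpleGraph (ZMod n)}
    (hG : NonCrossing G) {a b c d : ZMod n} (hab : G.Adj a b) (hac : a.val < c.val)
    (hcb : c.val < b.val) (hbd : b.val < d.val) : ¬ G.Adj c d := by
  intro hcd
  have hne {x y : ZMod n} (h : x.val < y.val) : x ≠ y := fun e => h.ne (congrArg ZMod.val e)
  have hcross := hG a b c d hab hcd (hne hac) (hne (hac.trans (hcb.trans hbd)))
    (hne hcb).symm (hne hbd)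
  exact not_strictBetween_of_val_le (hac.trans hcb) hbd.le
    (hcross.mp (strictBetween_of_val_lt_of_val_lt hac hcb))

theorem NonCrossing.eq_of_isNClique_of_isNClique {G : SimpleGraph (ZMod n)} (hG : NonCrossing G)
    {a b c a' c' : ZMod n} (h : G.IsNClique 3 {a, b, c}) (h' : G.IsNClique 3 {a', b, c'})
    (hab : a.val < b.val) (hbc : b.val < c.val) (hab' : a'.val < b.val) (hbc' : b.val < c'.val) :
    a = a' ∧ c = c' := by
  rw [is3Clique_triple_iff] at h h'
  obtain ⟨hab_adj, hac_adj, hbc_adj⟩ := h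
  obtain ⟨hab_adj', hac_adj', hbc_adj'⟩ := h'
  constructor <;> refine ZMod.val_injective n (le_antisymm (not_lt.mp ?_) (not_lt.mp ?_))
  · exact (hG.not_adj_of_val_lt_of_val_lt_of_val_lt hab_adj' · hab hbc hac_adj)
  · exact (hG.not_adj_of_val_lt_of_val_lt_of_val_lt hab_adj · hab' hbc' hac_adj')
  · exact (hG.not_adj_of_val_lt_of_val_lt_of_val_lt hac_adj' hab' hbc' · hbc_adj)
  · exact (hG.not_adj_of_val_lt_of_val_lt_of_val_lt hac_adj hab hbc · hbc_adj')

end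

theorem stmt13_general (n : ℕ) [NeZero n] (G : SimpleGraph (ZMod n))
    [DecidableRel G.Adj] (hnc : NonCrossing G) :
    (G.cliqueFinset 3).card ≤ n - 2 := by
  let IsMiddle (t : Finset (ZMod n)) (m : ℕ) : Prop :=
    ∃ a b c : ZMod n, a.val < b.val ∧ b.val < c.val ∧ t = {a, b, c} ∧ b.val = m
  calc #(G.cliqueFinset 3) ≤ #(Ioo 0 (n - 1)) := by
        refine card_le_card_of_forall_subsingleton IsMiddle (fun t ht => ?_) ?_
        · obtain ⟨a, b, c, hab, hbc, rfl⟩ :=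
            ZMod.exists_val_lt_val_lt_eq_of_card_eq_three (mem_cliqueFinset_iff.mp ht).card_eq
          have := c.val_lt
          exact ⟨b.val, mem_Ioo.mpr (by omega), a, b, c, hab, hbc, rfl, rfl⟩
        · rintro m - t ⟨ht, a, b, c, hab, hbc, rfl, rfl⟩
            t' ⟨ht', a', b', c', hab', hbc', rfl, hb⟩
          obtain rfl := ZMod.val_injective n hb
          obtain ⟨rfl, rfl⟩ := hnc.eq_of_isNClique_of_isNClique (mem_cliqueFinset_iff.mp ht)
            (mem_cliqueFinset_iff.mp ht') hab hbc hab' hbc'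
          rfl
    _ = n - 2 := by rw [Nat.card_Ioo]; omega

/-- A non-crossing graph on `n ≥ 3` points in cyclic order on a circle has at
most `n - 2` triangles. -/
theorem stmt13 (n : ℕ) [NeZero n] (hn : 3 ≤ n) (G : SimpleGraph (ZMod n))
    [DecidableRel G.Adj] (hnc : NonCrossing G) :
    (G.cliqueFinset 3).card ≤ n - 2 :=
  stmt13_general n G hnc
end

section
/- Let n and m be such that n ≥ m + 3, and let G be a non-crossing finite simple graph on the vertex set ZMod n. Suppose there are m outer edges e_1 = {a_1, a_1+1}, …, e_m = {a_m, a_m+1} that are pairwise non-adjacent (all 2m endpoints are distinct) and none of which is an edge of G. Then G has at most n − m − 2 triangles. -/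
namespace NC14

variable {n : ℕ} [NeZero n]

lemma val_sub' (u w : ZMod n) :
    (u - w).val = if w.val ≤ u.val then u.val - w.val else u.val + n - w.val := by
  have hu := ZMod.val_lt u
  have hw := ZMod.val_lt w
  by_cases hw0 : w = 0
  · subst hw0
    simp [ZMod.val_zero]
  · have hw1 : 1 ≤ w.val := ZMod.val_pos.mpr hw0
    rw [sub_eq_add_neg, ZMod.val_add, ZMod.neg_val, if_neg hw0]
    by_cases hle : w.val ≤ u.val
    · rw [if_pos hle]
      have h : u.val + (n - w.val) = (u.val - w.val) + n := by omega
      rw [h, Nat.add_mod_right]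
      exact Nat.mod_eq_of_lt (by omega)
    · rw [if_neg hle, Nat.mod_eq_of_lt (by omega)]
      omega

lemma pinj (c : ZMod n) {u v : ZMod n} (h : (u - c).val = (v - c).val) : u = v := by
  have h2 : u - c = v - c := ZMod.val_injective n h
  exact sub_left_injective h2

lemma sb_iff (c a b x : ZMod n) (hab : (a - c).val < (b - c).val) :
    StrictBetween a b x ↔ ((a - c).val < (x - c).val ∧ (x - c).val < (b - c).val) := by
  have h1 : x - a = (x - c) - (a - c) := by ring
  have h2 : b - a = (b - c) - (a - c) := by ring
  have hx := ZMod.val_lt (x - c)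
  have hb := ZMod.val_lt (b - c)
  have ha := ZMod.val_lt (a - c)
  have e1 := val_sub' (x - c) (a - c)
  have e2 := val_sub' (b - c) (a - c)
  unfold StrictBetween
  rw [h1, h2, e1, e2]
  split_ifs <;> omega

variable {G : SimpleGraph (ZMod n)}

lemma cross_aux (hnc : NonCrossing G) (c : ZMod n)
    {a b u v : ZMod n} (hab : G.Adj a b) (huv : G.Adj u v)
    (h1 : (a - c).val < (u - c).val) (h2 : (u - c).val < (b - c).val)
    (h3 : ¬ ((a - c).val < (v - c).val ∧ (v - c).val < (b - c).val))
    (h4 : (v - c).val ≠ (a - c).val) (h5 : (v - c).val ≠ (b - c).val) : False := by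
  have hab' : (a - c).val < (b - c).val := h1.trans h2
  have hne : ∀ {p q : ZMod n}, (p - c).val ≠ (q - c).val → p ≠ q := by
    intro p q h hpq; exact h (by rw [hpq])
  have key := hnc a b u v hab huv (hne (by omega)) (hne (by omega))
    (hne (by omega)) (hne (by omega))
  rw [sb_iff c a b u hab', sb_iff c a b v hab'] at key
  exact h3 (key.mp ⟨h1, h2⟩)

/-- A triangle of `G` with vertices sorted by position relative to cut `c`. -/
structure Tri (G : SimpleGraph (ZMod n)) (c x y z : ZMod n) : Prop where
  axy : G.Adj x y
  axz : G.Adj x z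
  ayz : G.Adj y z
  oxy : (x - c).val < (y - c).val
  oyz : (y - c).val < (z - c).val

lemma no_mid_lt (hnc : NonCrossing G) {c x1 y1 z1 x2 y2 z2 : ZMod n}
    (t1 : Tri G c x1 y1 z1) (t2 : Tri G c x2 y2 z2)
    (hm : (y1 - c).val = (y2 - c).val) (hx : (x1 - c).val < (x2 - c).val) : False := by
  have o3 := t2.oxy
  have o4 := t2.oyz
  have o1 := t1.oxy
  exact cross_aux hnc c t1.axy t2.axz hx (by omega) (by omega) (by omega) (by omega)

lemma no_z_lt (hnc : NonCrossing G) {c x1 y1 z1 x2 y2 z2 : ZMod n}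
    (t1 : Tri G c x1 y1 z1) (t2 : Tri G c x2 y2 z2)
    (hxe : x1 = x2) (hm : (y1 - c).val = (y2 - c).val)
    (hz : (z2 - c).val < (z1 - c).val) : False := by
  have o1 := t1.oxy
  have o2 := t1.oyz
  have o4 := t2.oyz
  have huv : G.Adj z2 x1 := by rw [hxe]; exact t2.axz.symm
  exact cross_aux hnc c t1.ayz huv (by omega) (by omega) (by omega) (by omega) (by omega)

lemma mid_eq (hnc : NonCrossing G) {c x1 y1 z1 x2 y2 z2 : ZMod n}
    (t1 : Tri G c x1 y1 z1) (t2 : Tri G c x2 y2 z2)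
    (hm : (y1 - c).val = (y2 - c).val) : x1 = x2 ∧ y1 = y2 ∧ z1 = z2 := by
  have hy : y1 = y2 := pinj c hm
  have hx : x1 = x2 := by
    rcases lt_trichotomy ((x1 - c).val) ((x2 - c).val) with h | h | h
    · exact absurd (no_mid_lt hnc t1 t2 hm h) not_false
    · exact pinj c h
    · exact absurd (no_mid_lt hnc t2 t1 hm.symm h) not_false
  have hz : z1 = z2 := by
    rcases lt_trichotomy ((z1 - c).val) ((z2 - c).val) with h | h | h
    · exact absurd (no_z_lt hnc t2 t1 hx.symm hm.symm h) not_false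
    · exact pinj c h
    · exact absurd (no_z_lt hnc t1 t2 hx hm h) not_false
  exact ⟨hx, hy, hz⟩

lemma no_AB (hnc : NonCrossing G) {c x1 y1 z1 x2 y2 z2 : ZMod n}
    (t1 : Tri G c x1 y1 z1) (t2 : Tri G c x2 y2 z2)
    (hx1 : (x1 - c).val ≠ 0) (hx2 : (x2 - c).val = 0)
    (hv : (y1 - c).val = (z2 - c).val) : False := by
  have o1 := t1.oxy
  have o2 := t1.oyz
  exact cross_aux hnc c t2.axz t1.axz (by omega) (by omega) (by omega) (by omega) (by omega)

lemma no_BB_lt (hnc : NonCrossing G) {c x1 y1 z1 x2 y2 z2 : ZMod n}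
    (t1 : Tri G c x1 y1 z1) (t2 : Tri G c x2 y2 z2)
    (hx1 : (x1 - c).val = 0) (hx2 : (x2 - c).val = 0)
    (hz : (z1 - c).val = (z2 - c).val) (hy : (y1 - c).val < (y2 - c).val) : False := by
  have o1 := t1.oxy
  have o4 := t2.oyz
  exact cross_aux hnc c t1.ayz t2.axy.symm (by omega) (by omega) (by omega) (by omega)
    (by omega)

/-- Map a finset of naturals (meant to have three elements `lo < mid < hi`)
to `hi` if `lo = 0`, else to `mid`. -/
def phiN (t : Finset ℕ) : ℕ :=
  if h : t.Nonempty then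
    (if t.min' h = 0 then t.max' h else t.sum id - t.min' h - t.max' h)
  else 0

lemma phiN_triple {α β γ : ℕ} (h1 : α < β) (h2 : β < γ) :
    phiN {α, β, γ} = if α = 0 then γ else β := by
  have hne : ({α, β, γ} : Finset ℕ).Nonempty := ⟨α, by simp⟩
  have hmin : ({α, β, γ} : Finset ℕ).min' hne = α :=
    le_antisymm (Finset.min'_le _ _ (by simp))
      (Finset.le_min' _ _ _ (by intro b hb; simp at hb; omega))
  have hmax : ({α, β, γ} : Finset ℕ).max' hne = γ :=
    le_antisymm (Finset.max'_le _ _ _ (by intro b hb; simp at hb; omega))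
      (Finset.le_max' _ _ (by simp))
  have hsum : ({α, β, γ} : Finset ℕ).sum id = α + β + γ := by
    rw [Finset.sum_insert (by simp; omega), Finset.sum_insert (by simp; omega),
      Finset.sum_singleton]
    simp only [id_eq]
    omega
  unfold phiN
  rw [dif_pos hne, hmin, hmax, hsum]
  split_ifs <;> omega

/-- The injection: a triangle with sorted positions `Px < Py < Pz` goes to
`Pz` if `Px = 0`, else to `Py`. -/
def phiF (c : ZMod n) (s : Finset (ZMod n)) : ℕ :=
  phiN (s.image fun v => (v - c).val)

lemma phi_eq (c : ZMod n) {x y z : ZMod n}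
    (o1 : (x - c).val < (y - c).val) (o2 : (y - c).val < (z - c).val) :
    phiF c {x, y, z} = if (x - c).val = 0 then (z - c).val else (y - c).val := by
  have himg : ({x, y, z} : Finset (ZMod n)).image (fun v => (v - c).val)
      = {(x - c).val, (y - c).val, (z - c).val} := by
    simp [Finset.image_insert, Finset.image_singleton]
  rw [phiF, himg, phiN_triple o1 o2]

lemma clique_decomp [DecidableRel G.Adj] (c : ZMod n) {s : Finset (ZMod n)}
    (hs : s ∈ G.cliqueFinset 3) :
    ∃ x y z : ZMod n, s = {x, y, z} ∧ Tri G c x y z := by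
  rw [SimpleGraph.mem_cliqueFinset_iff] at hs
  obtain ⟨p, q, r, hpq, hpr, hqr, rfl⟩ := Finset.card_eq_three.mp hs.card_eq
  have Apq : G.Adj p q := hs.1 (by simp) (by simp) hpq
  have Apr : G.Adj p r := hs.1 (by simp) (by simp) hpr
  have Aqr : G.Adj q r := hs.1 (by simp) (by simp) hqr
  have vpq : (p - c).val ≠ (q - c).val := fun h => hpq (pinj c h)
  have vpr : (p - c).val ≠ (r - c).val := fun h => hpr (pinj c h)
  have vqr : (q - c).val ≠ (r - c).val := fun h => hqr (pinj c h)
  rcases lt_or_gt_of_ne vpq with h1 | h1 <;> rcases lt_or_gt_of_ne vpr with h2 | h2 <;>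
    rcases lt_or_gt_of_ne vqr with h3 | h3
  · exact ⟨p, q, r, rfl, Apq, Apr, Aqr, h1, h3⟩
  · exact ⟨p, r, q, by ext w; simp; tauto, Apr, Apq, Aqr.symm, h2, h3⟩
  · omega
  · exact ⟨r, p, q, by ext w; simp; tauto, Apr.symm, Aqr.symm, Apq, h2, h1⟩
  · exact ⟨q, p, r, by ext w; simp; tauto, Apq.symm, Aqr, Apr, h1, h2⟩
  · omega
  · exact ⟨q, r, p, by ext w; simp; tauto, Aqr, Apq.symm, Apr.symm, h3, h2⟩
  · exact ⟨r, q, p, by ext w; simp; tauto, Aqr.symm, Apr.symm, Apq.symm, h3, h1⟩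

lemma phi_injOn [DecidableRel G.Adj] (hnc : NonCrossing G) (c : ZMod n) :
    Set.InjOn (phiF c) (G.cliqueFinset 3) := by
  intro s hs t ht h
  obtain ⟨x1, y1, z1, rfl, t1⟩ := clique_decomp c hs
  obtain ⟨x2, y2, z2, rfl, t2⟩ := clique_decomp c ht
  rw [phi_eq c t1.oxy t1.oyz, phi_eq c t2.oxy t2.oyz] at h
  by_cases h1 : (x1 - c).val = 0 <;> by_cases h2 : (x2 - c).val = 0 <;>
    simp only [h1, h2, if_pos, if_neg, if_true, if_false] at h
  · -- both B-type
    have hz : z1 = z2 := pinj c h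
    have hx : x1 = x2 := pinj c (by rw [h1, h2])
    have hy : y1 = y2 := by
      rcases lt_trichotomy ((y1 - c).val) ((y2 - c).val) with hlt | heq | hgt
      · exact absurd (no_BB_lt hnc t1 t2 h1 h2 (by rw [h]) hlt) not_false
      · exact pinj c heq
      · exact absurd (no_BB_lt hnc t2 t1 h2 h1 (by rw [h]) hgt) not_false
    rw [hx, hy, hz]
  · exact absurd (no_AB hnc t2 t1 h2 h1 h.symm) not_false
  · exact absurd (no_AB hnc t1 t2 h1 h2 h) not_false
  · obtain ⟨hx, hy, hz⟩ := mid_eq hnc t1 t2 h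
    rw [hx, hy, hz]

section Pairs

lemma avoid {c g w1 w2 : ZMod n} (hadj : G.Adj w1 w2) (hfg : ¬ G.Adj g (g + 1))
    (h1 : (w1 - c).val = (g - c).val) (h2 : (w2 - c).val = (g + 1 - c).val) : False := by
  obtain rfl := pinj c h1
  obtain rfl := pinj c h2
  exact hfg hadj

lemma pair_not_both (hnc : NonCrossing G) (c g : ZMod n) (hfg : ¬ G.Adj g (g + 1))
    (hp1 : 1 ≤ (g - c).val) (hp2 : (g + 1 - c).val = (g - c).val + 1)
    {x1 y1 z1 x2 y2 z2 : ZMod n} (t1 : Tri G c x1 y1 z1) (t2 : Tri G c x2 y2 z2)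
    (v1 : (if (x1 - c).val = 0 then (z1 - c).val else (y1 - c).val) = (g - c).val)
    (v2 : (if (x2 - c).val = 0 then (z2 - c).val else (y2 - c).val) = (g - c).val + 1) :
    False := by
  have o1 := t1.oxy; have o2 := t1.oyz; have o3 := t2.oxy; have o4 := t2.oyz
  by_cases h1 : (x1 - c).val = 0 <;> by_cases h2 : (x2 - c).val = 0 <;>
    simp only [h1, h2, if_pos, if_neg, if_true, if_false] at v1 v2
  · -- B B : Pz1 = p, Pz2 = p+1
    have hy2 : (y2 - c).val ≠ (g - c).val := fun he =>
      avoid t2.ayz hfg he (by omega)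
    exact cross_aux hnc c t1.axz t2.ayz (by omega) (by omega) (by omega) (by omega)
      (by omega)
  · -- B A : Pz1 = p, Py2 = p+1
    have hx2 : (x2 - c).val ≠ (g - c).val := fun he =>
      avoid t2.axy hfg he (by omega)
    exact cross_aux hnc c t1.axz t2.axy (by omega) (by omega) (by omega) (by omega)
      (by omega)
  · -- A B : Py1 = p, Pz2 = p+1
    have hz1 : (z1 - c).val ≠ (g + 1 - c).val := fun he =>
      avoid t1.ayz hfg (by omega) he
    exact cross_aux hnc c t2.axz t1.ayz (by omega) (by omega) (by omega) (by omega)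
      (by omega)
  · -- A A : Py1 = p, Py2 = p+1
    have hz1 : (z1 - c).val ≠ (g + 1 - c).val := fun he =>
      avoid t1.ayz hfg (by omega) he
    have hx2 : (x2 - c).val ≠ (g - c).val := fun he =>
      avoid t2.axy hfg he (by omega)
    exact cross_aux hnc c t1.ayz t2.axy.symm (by omega) (by omega) (by omega) (by omega)
      (by omega)

lemma pair_not_two (c g : ZMod n) (hfg : ¬ G.Adj g (g + 1))
    (hp : (g - c).val = 1) (hp2 : (g + 1 - c).val = 2)
    {x y z : ZMod n} (t : Tri G c x y z)
    (v : (if (x - c).val = 0 then (z - c).val else (y - c).val) = 2) : False := by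
  have o1 := t.oxy; have o2 := t.oyz
  by_cases h : (x - c).val = 0 <;> simp only [h, if_pos, if_neg, if_true, if_false] at v
  · exact avoid (c := c) t.ayz hfg (by omega) (by omega)
  · exact avoid (c := c) t.axy hfg (by omega) (by omega)

end Pairs

lemma val_one' (hn : 1 < n) : (1 : ZMod n).val = 1 := by
  rw [ZMod.val_one_eq_one_mod]; exact Nat.mod_eq_of_lt hn

lemma val_neg_one' (hn : 1 < n) : (-1 : ZMod n).val = n - 1 := by
  rw [ZMod.neg_val, if_neg, val_one' hn]
  intro h
  have := congrArg ZMod.val h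
  rw [val_one' hn, ZMod.val_zero] at this
  omega

lemma val_add_one' {w : ZMod n} (hn : 1 < n) (hw : w.val ≠ n - 1) :
    (w + 1).val = w.val + 1 := by
  rw [ZMod.val_add, val_one' hn]
  exact Nat.mod_eq_of_lt (by have := ZMod.val_lt w; omega)

lemma val_eq_last {c v : ZMod n} (hn : 1 < n) (h : (v - c).val = n - 1) : v = c - 1 := by
  apply pinj c
  rw [h]
  have : c - 1 - c = -1 := by ring
  rw [this, val_neg_one' hn]

lemma val_eq_zero' {c v : ZMod n} (h : (v - c).val = 0) : v = c := by
  apply pinj c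
  rw [h]
  simp

end NC14

open NC14 in
/-- If `n ≥ m + 3` and `G` is a non-crossing graph on `ZMod n` such that there
are `m` pairwise non-adjacent outer edges `{aᵢ, aᵢ+1}` none of which is an edge
of `G`, then `G` has at most `n - m - 2` triangles. -/
theorem stmt14 (n m : ℕ) [NeZero n] (hnm : m + 3 ≤ n)
    (G : SimpleGraph (ZMod n)) [DecidableRel G.Adj] (hnc : NonCrossing G)
    (a : Fin m → ZMod n)
    (hself : ∀ i, a i ≠ a i + 1)
    (hdisj : ∀ i j : Fin m, i ≠ j →
      a i ≠ a j ∧ a i ≠ a j + 1 ∧ a i + 1 ≠ a j ∧ a i + 1 ≠ a j + 1)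
    (hfree : ∀ i, ¬ G.Adj (a i) (a i + 1)) :
    (G.cliqueFinset 3).card ≤ n - m - 2 := by
  classical
  have hn1 : 1 < n := by omega
  rcases Nat.eq_zero_or_pos m with hm0 | hm0
  · -- m = 0 : plain bound n - 2
    subst hm0
    set c : ZMod n := 0 with hc
    set I := (G.cliqueFinset 3).image (phiF c) with hI
    have hIcard : I.card = (G.cliqueFinset 3).card :=
      Finset.card_image_of_injOn (phi_injOn hnc c)
    have hrange : I ⊆ Finset.Icc 2 (n - 1) := by
      intro v hv
      obtain ⟨s, hs, rfl⟩ := Finset.mem_image.mp hv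
      obtain ⟨x, y, z, rfl, t⟩ := clique_decomp c hs
      rw [phi_eq c t.oxy t.oyz]
      have o1 := t.oxy; have o2 := t.oyz
      have hz := ZMod.val_lt (z - c)
      rw [Finset.mem_Icc]
      split_ifs with h <;> omega
    have := Finset.card_le_card hrange
    rw [hIcard, Nat.card_Icc] at this
    omega
  · -- m ≥ 1
    set i0 : Fin m := ⟨0, hm0⟩ with hi0
    set c : ZMod n := a i0 + 1 with hc
    set I := (G.cliqueFinset 3).image (phiF c) with hI
    have hIcard : I.card = (G.cliqueFinset 3).card :=
      Finset.card_image_of_injOn (phi_injOn hnc c)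
    -- helper to extract triangles from members of I
    have getTri : ∀ v ∈ I, ∃ x y z : ZMod n, Tri G c x y z ∧
        (if (x - c).val = 0 then (z - c).val else (y - c).val) = v := by
      intro v hv
      obtain ⟨s, hs, rfl⟩ := Finset.mem_image.mp hv
      obtain ⟨x, y, z, rfl, t⟩ := clique_decomp c hs
      exact ⟨x, y, z, t, (phi_eq c t.oxy t.oyz).symm⟩
    -- range: I ⊆ [2, n-2]
    have hrange : I ⊆ Finset.Icc 2 (n - 2) := by
      intro v hv
      obtain ⟨x, y, z, t, hval⟩ := getTri v hv
      have o1 := t.oxy; have o2 := t.oyz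
      have hzlt := ZMod.val_lt (z - c)
      rw [Finset.mem_Icc]
      by_cases h : (x - c).val = 0
      · rw [if_pos h] at hval
        have hzne : (z - c).val ≠ n - 1 := by
          intro hzl
          have hz' : z = c - 1 := val_eq_last hn1 hzl
          have hx' : x = c := val_eq_zero' h
          have : G.Adj (a i0) (a i0 + 1) := by
            have := t.axz
            rw [hx', hz', hc] at this
            simpa using this.symm
          exact hfree i0 this
        omega
      · rw [if_neg h] at hval
        omega
    -- facts about pairs i ≠ i0
    have pairfacts : ∀ i : Fin m, i ≠ i0 →
        1 ≤ (a i - c).val ∧ (a i + 1 - c).val = (a i - c).val + 1 ∧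
        (a i + 1 - c).val ≤ n - 2 := by
      intro i hi
      obtain ⟨d1, d2, d3, d4⟩ := hdisj i i0 hi
      have hne0 : (a i - c).val ≠ 0 := by
        intro h
        exact d2 (by rw [val_eq_zero' h, hc])
      have hnelast : (a i - c).val ≠ n - 1 := by
        intro h
        apply d1
        rw [val_eq_last hn1 h, hc]
        ring
      have hadd : (a i + 1 - c).val = (a i - c).val + 1 := by
        have he : a i + 1 - c = (a i - c) + 1 := by ring
        rw [he, val_add_one' hn1 hnelast]
      have hup : (a i + 1 - c).val ≠ n - 1 := by
        intro h
        apply d3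
        rw [val_eq_last hn1 h, hc]
        ring
      have := ZMod.val_lt (a i + 1 - c)
      exact ⟨by omega, hadd, by omega⟩
    -- the excluded value for each pair
    set qf : Fin m → ℕ := fun i =>
      if (a i - c).val + 1 ∈ I then (a i - c).val else (a i - c).val + 1 with hqf
    have hqspec : ∀ i : Fin m, i ≠ i0 →
        qf i ∉ I ∧ qf i ∈ Finset.Icc 2 (n - 2) := by
      intro i hi
      obtain ⟨hp1, hp2, hp3⟩ := pairfacts i hi
      rw [hqf]
      simp only []
      by_cases hmem : (a i - c).val + 1 ∈ I
      · rw [if_pos hmem]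
        obtain ⟨x2, y2, z2, t2, v2⟩ := getTri _ hmem
        constructor
        · intro hpI
          obtain ⟨x1, y1, z1, t1, v1⟩ := getTri _ hpI
          exact pair_not_both hnc c (a i) (hfree i) hp1 hp2 t1 t2 v1 v2
        · rw [Finset.mem_Icc]
          have hp2' : 2 ≤ (a i - c).val := by
            rcases Nat.lt_or_ge ((a i - c).val) 2 with h | h
            · exfalso
              have hpe : (a i - c).val = 1 := by omega
              exact pair_not_two c (a i) (hfree i) hpe (by omega) t2 (by omega)
            · exact h
          omega
      · rw [if_neg hmem]
        exact ⟨hmem, Finset.mem_Icc.mpr (by omega)⟩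
    have hqinj : Set.InjOn qf (Finset.univ.erase i0) := by
      intro i hi j hj hij
      by_contra hne
      have hi' : i ≠ i0 := (Finset.mem_erase.mp hi).1
      have hj' : j ≠ i0 := (Finset.mem_erase.mp hj).1
      obtain ⟨d1, d2, d3, d4⟩ := hdisj i j hne
      obtain ⟨hpi1, hpi2, _⟩ := pairfacts i hi'
      obtain ⟨hpj1, hpj2, _⟩ := pairfacts j hj'
      have hvi : qf i = (a i - c).val ∨ qf i = (a i + 1 - c).val := by
        rw [hqf]; simp only []; split_ifs
        · exact Or.inl rfl
        · exact Or.inr (by omega)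
      have hvj : qf j = (a j - c).val ∨ qf j = (a j + 1 - c).val := by
        rw [hqf]; simp only []; split_ifs
        · exact Or.inl rfl
        · exact Or.inr (by omega)
      rcases hvi with hvi | hvi <;> rcases hvj with hvj | hvj
      · exact d1 (pinj c (by rw [← hvi, hij, hvj]))
      · exact d2 (pinj c (by rw [← hvi, hij, hvj]))
      · exact d3 (pinj c (by rw [← hvi, hij, hvj]))
      · exact d4 (pinj c (by rw [← hvi, hij, hvj]))
    set J := (Finset.univ.erase i0).image qf with hJ
    have hJcard : J.card = m - 1 := by
      rw [hJ, Finset.card_image_of_injOn hqinj, Finset.card_erase_of_mem (Finset.mem_univ _)]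
      simp
    have hJsub : J ⊆ Finset.Icc 2 (n - 2) := by
      intro v hv
      obtain ⟨i, hi, rfl⟩ := Finset.mem_image.mp hv
      exact (hqspec i (Finset.mem_erase.mp hi).1).2
    have hsub : I ⊆ Finset.Icc 2 (n - 2) \ J := by
      intro v hv
      rw [Finset.mem_sdiff]
      refine ⟨hrange hv, ?_⟩
      intro hvJ
      obtain ⟨i, hi, hqi⟩ := Finset.mem_image.mp hvJ
      exact (hqspec i (Finset.mem_erase.mp hi).1).1 (hqi ▸ hv)
    have hcard := Finset.card_le_card hsub
    rw [Finset.card_sdiff_of_subset hJsub, hIcard, hJcard, Nat.card_Icc] at hcard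
    omega
end
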